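/- In a potential outcomes model where Z is randomized (Z independent of all potential outcomes Y(z,d) and D(z)), the average controlled direct effect ACDE(d) = E[Y(1,d)] − E[Y(0,d)] satisfies the bounds pr(D=d, Y=1 | Z=1) + pr(D=d, Y=0 | Z=0) − 1 ≤ ACDE(d) ≤ 1 − pr(D=d, Y=0 | Z=1) − pr(D=d, Y=1 | Z=0). -/

import Mathlib

open MeasureTheory ProbabilityTheory

lemma bool_meas {Ω : Type*} [MeasurableSpace Ω] {f : Ω → Bool} (hf : Measurable f) (b : Bool) :
    MeasurableSet {ω | f ω = b} := hf (measurableSet_singleton b)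

lemma key_lemma {Ω : Type*} [MeasurableSpace Ω] (μ : Measure Ω) [IsProbabilityMeasure μ]
    (Z D Y : Ω → Bool) (Y' : Bool → Bool → Ω → Bool) (D' : Bool → Ω → Bool)
    (hZ : Measurable Z) (hD : Measurable D) (hY : Measurable Y)
    (hY' : ∀ z d, Measurable (Y' z d))
    (hindep : IndepFun Z
      (fun ω => ((fun z d => Y' z d ω, fun z => D' z ω) :
        (Bool → Bool → Bool) × (Bool → Bool))) μ)
    (hconsD : ∀ ω, D ω = D' (Z ω) ω)
    (hconsY : ∀ ω, Y ω = Y' (Z ω) (D ω) ω)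
    (d z : Bool) (hz : μ {ω | Z ω = z} ≠ 0) :
    ((μ[|{ω | Z ω = z}]) {ω | D ω = d ∧ Y ω = true}).toReal ≤ (μ {ω | Y' z d ω = true}).toReal ∧
    (μ {ω | Y' z d ω = true}).toReal ≤ 1 - ((μ[|{ω | Z ω = z}]) {ω | D ω = d ∧ Y ω = false}).toReal := by
  set s := {ω | Z ω = z} with hs
  set u := {ω | Y' z d ω = true} with hu
  have hsm : MeasurableSet s := bool_meas hZ z
  have hum : MeasurableSet u := bool_meas (hY' z d) true
  have hsfin : μ s ≠ ⊤ := measure_ne_top μ s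
  -- independence: μ (s ∩ u) = μ s * μ u
  have hindep' : IndepFun Z (Y' z d) μ := by
    have hg : Measurable (fun p : (Bool → Bool → Bool) × (Bool → Bool) => p.1 z d) :=
      (measurable_pi_apply d).comp ((measurable_pi_apply z).comp measurable_fst)
    exact hindep.comp measurable_id hg
  have hmul : μ (s ∩ u) = μ s * μ u := by
    have := hindep'.measure_inter_preimage_eq_mul {z} {true}
      (measurableSet_singleton z) (measurableSet_singleton true)
    simpa [Set.preimage, hs, hu] using this
  have hsub1 : s ∩ {ω | D ω = d ∧ Y ω = true} ⊆ s ∩ u := by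
    rintro ω ⟨hωs, hωd, hωy⟩
    refine ⟨hωs, ?_⟩
    have : Z ω = z := hωs
    simp only [hu, Set.mem_setOf_eq]
    rw [← hωd, ← this, ← hconsY ω]
    exact hωy
  have hdisj : Disjoint (s ∩ u) (s ∩ {ω | D ω = d ∧ Y ω = false}) := by
    rw [Set.disjoint_left]
    rintro ω ⟨hωs, hωu⟩ ⟨_, hωd, hωy⟩
    have hzω : Z ω = z := hωs
    have : Y ω = true := by rw [hconsY ω, hzω, hωd]; exact hωu
    rw [hωy] at this; exact Bool.false_ne_true this
  have hcond1 : (μ[|s]) {ω | D ω = d ∧ Y ω = true} = (μ s)⁻¹ * μ (s ∩ {ω | D ω = d ∧ Y ω = true}) :=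
    cond_apply hsm μ _
  have hcond2 : (μ[|s]) {ω | D ω = d ∧ Y ω = false} = (μ s)⁻¹ * μ (s ∩ {ω | D ω = d ∧ Y ω = false}) :=
    cond_apply hsm μ _
  have hcancel : (μ s)⁻¹ * (μ s * μ u) = μ u := by
    rw [← mul_assoc, ENNReal.inv_mul_cancel hz hsfin, one_mul]
  constructor
  · have h1 : (μ[|s]) {ω | D ω = d ∧ Y ω = true} ≤ μ u := by
      rw [hcond1]
      calc (μ s)⁻¹ * μ (s ∩ {ω | D ω = d ∧ Y ω = true})
          ≤ (μ s)⁻¹ * μ (s ∩ u) := by gcongr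
        _ = μ u := by rw [hmul, hcancel]
    exact ENNReal.toReal_mono (measure_ne_top μ u) h1
  · have hsum : μ (s ∩ u) + μ (s ∩ {ω | D ω = d ∧ Y ω = false}) ≤ μ s := by
      rw [← measure_union hdisj (hsm.inter ((bool_meas hD d).inter (bool_meas hY false)))]
      exact measure_mono (Set.union_subset Set.inter_subset_left Set.inter_subset_left)
    have h2 : μ u + (μ[|s]) {ω | D ω = d ∧ Y ω = false} ≤ 1 := by
      rw [hcond2, ← hcancel, ← hmul, ← mul_add]
      calc (μ s)⁻¹ * (μ (s ∩ u) + μ (s ∩ {ω | D ω = d ∧ Y ω = false}))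
          ≤ (μ s)⁻¹ * μ s := by gcongr
        _ = 1 := ENNReal.inv_mul_cancel hz hsfin
    have hfin1 : μ u ≠ ⊤ := measure_ne_top μ u
    have hfin2 : (μ[|s]) {ω | D ω = d ∧ Y ω = false} ≠ ⊤ := by
      rw [hcond2]
      exact ENNReal.mul_ne_top (by simp [ENNReal.inv_ne_top, hz]) (measure_ne_top μ _)
    have := ENNReal.toReal_mono ENNReal.one_ne_top h2
    rw [ENNReal.toReal_add hfin1 hfin2, ENNReal.toReal_one] at this
    linarith

lemma integral_if_eq {Ω : Type*} [MeasurableSpace Ω] (μ : Measure Ω) [IsProbabilityMeasure μ]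
    {f : Ω → Bool} (hf : Measurable f) :
    (∫ ω, (if f ω = true then (1 : ℝ) else 0) ∂μ) = (μ {ω | f ω = true}).toReal := by
  have : (fun ω => (if f ω = true then (1 : ℝ) else 0))
      = Set.indicator {ω | f ω = true} (fun _ => (1:ℝ)) := by
    ext ω; by_cases h : f ω = true <;> simp [Set.indicator, h]
  rw [this, integral_indicator_const (1:ℝ) (bool_meas hf true), smul_eq_mul, mul_one, measureReal_def]

/-- Balke–Pearl-type bounds on the average controlled direct effect
`ACDE(d) = E[Y(1,d)] - E[Y(0,d)]` when `Z` is randomized. -/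
theorem stmt_5 {Ω : Type*} [MeasurableSpace Ω] (μ : Measure Ω) [IsProbabilityMeasure μ]
    (Z D Y : Ω → Bool) (Y' : Bool → Bool → Ω → Bool) (D' : Bool → Ω → Bool)
    (hZ : Measurable Z) (hD : Measurable D) (hY : Measurable Y)
    (hY' : ∀ z d, Measurable (Y' z d)) (hD' : ∀ z, Measurable (D' z))
    (hZ0 : μ {ω | Z ω = false} ≠ 0) (hZ1 : μ {ω | Z ω = true} ≠ 0)
    (hindep : IndepFun Z
      (fun ω => ((fun z d => Y' z d ω, fun z => D' z ω) :
        (Bool → Bool → Bool) × (Bool → Bool))) μ)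
    (hconsD : ∀ ω, D ω = D' (Z ω) ω)
    (hconsY : ∀ ω, Y ω = Y' (Z ω) (D ω) ω)
    (d : Bool) (ACDE : ℝ)
    (hACDE : ACDE = (∫ ω, (if Y' true d ω = true then (1 : ℝ) else 0) ∂μ)
      - ∫ ω, (if Y' false d ω = true then (1 : ℝ) else 0) ∂μ) :
    ((μ[|{ω | Z ω = true}]) {ω | D ω = d ∧ Y ω = true}).toReal
        + ((μ[|{ω | Z ω = false}]) {ω | D ω = d ∧ Y ω = false}).toReal - 1 ≤ ACDE ∧
      ACDE ≤ 1 - ((μ[|{ω | Z ω = true}]) {ω | D ω = d ∧ Y ω = false}).toReal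
        - ((μ[|{ω | Z ω = false}]) {ω | D ω = d ∧ Y ω = true}).toReal := by
  have hT := key_lemma μ Z D Y Y' D' hZ hD hY hY' hindep hconsD hconsY d true hZ1
  have hF := key_lemma μ Z D Y Y' D' hZ hD hY hY' hindep hconsD hconsY d false hZ0
  rw [integral_if_eq μ (hY' true d), integral_if_eq μ (hY' false d)] at hACDE
  constructor <;> [skip; skip] <;>
    · obtain ⟨hT1, hT2⟩ := hT; obtain ⟨hF1, hF2⟩ := hF
      linarith
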